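/- arXiv:2307.01648 — 2 statements merged into one kernel-verified Lean document; each statement's English description precedes it below -/
import Mathlib

section
/- The diameter of the configuration graph G(P) for a Parikh vector P with at least two nonzero entries and total length n is exactly n − max_{i∈Σ} P[i]. -/
open Module

/-- The Parikh vector of a word `w : Fin n → Fin σ`. -/
def parikh {n σ : ℕ} (w : Fin n → Fin σ) : Fin σ → ℕ :=
  fun a => (Finset.univ.filter fun i => w i = a).card

/-- Words of length `n` over alphabet `Fin σ` with Parikh vector `P`. -/
abbrev Words (n σ : ℕ) (P : Fin σ → ℕ) := {w : Fin n → Fin σ // parikh w = P}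

/-- `u` is obtained from `w` by a single 2-swap. -/
def isSwap {n σ : ℕ} (w u : Fin n → Fin σ) : Prop :=
  ∃ i j : Fin n, i ≠ j ∧ w i ≠ w j ∧ u = w ∘ Equiv.swap i j

/-- The configuration graph `G(P)`. -/
def configGraph (n σ : ℕ) (P : Fin σ → ℕ) : SimpleGraph (Words n σ P) :=
  SimpleGraph.fromRel fun w u => isSwap w.1 u.1

lemma parikh_comp_equiv {n σ : ℕ} (w : Fin n → Fin σ) (e : Equiv.Perm (Fin n)) :
    parikh (w ∘ e) = parikh w := by
  funext x
  exact Finset.card_equiv e (by simp)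

lemma exists_word {σ m : ℕ} (Q : Fin σ → ℕ) (h : ∑ i, Q i = m) :
    ∃ z : Fin m → Fin σ, parikh z = Q := by
  have hc : Fintype.card (Σ i : Fin σ, Fin (Q i)) = m := by simp [Fintype.card_sigma, h]
  let e : (Σ i : Fin σ, Fin (Q i)) ≃ Fin m := Fintype.equivFinOfCardEq hc
  refine ⟨fun p => (e.symm p).1, ?_⟩
  funext x
  have h1 : parikh (fun p => (e.symm p).1) x
      = Fintype.card {p : Fin m // (e.symm p).1 = x} := by
    rw [parikh, Fintype.card_subtype]
  have h2 : {p : Fin m // (e.symm p).1 = x} ≃ {s : Σ i : Fin σ, Fin (Q i) // s.1 = x} :=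
    (Equiv.subtypeEquiv e.symm (fun p => Iff.rfl))
  have h3 : {s : Σ i : Fin σ, Fin (Q i) // s.1 = x} ≃ Fin (Q x) :=
    { toFun := fun s => s.2 ▸ s.1.2
      invFun := fun t => ⟨⟨x, t⟩, rfl⟩
      left_inv := by rintro ⟨⟨i, t⟩, rfl⟩; rfl
      right_inv := fun t => rfl }
  rw [h1, Fintype.card_congr (h2.trans h3), Fintype.card_fin]

-- counting lemma
lemma exists_misplaced {n σ : ℕ} {w u : Fin n → Fin σ} (h : parikh w = parikh u)
    {x : Fin σ} {k : Fin n} (hk : u k = x) (hwk : w k ≠ x) :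
    ∃ j, w j = x ∧ u j ≠ x := by
  by_contra hno
  push_neg at hno
  have hsub : (Finset.univ.filter fun i => w i = x) ⊂ (Finset.univ.filter fun i => u i = x) := by
    constructor
    · intro j hj
      simp only [Finset.mem_filter, Finset.mem_univ, true_and] at hj ⊢
      exact hno j hj
    · intro hcon
      have := hcon (by simp [hk] : k ∈ (Finset.univ.filter fun i => u i = x))
      simp only [Finset.mem_filter, Finset.mem_univ, true_and] at this
      exact hwk this
  have := Finset.card_lt_card hsub
  have hx := congrFun h x
  rw [parikh, parikh] at hx
  omega

/-- The potential function for the upper bound. -/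
def pot {n σ : ℕ} (w u : Fin n → Fin σ) (a : Fin σ) : ℕ :=
  (Finset.univ.filter fun i => w i ≠ u i ∧ u i ≠ a).card

lemma exists_bad {n σ : ℕ} {w u : Fin n → Fin σ} (hp : parikh w = parikh u)
    (hne : w ≠ u) (a : Fin σ) : ∃ k, w k ≠ u k ∧ u k ≠ a := by
  have ⟨p, hpm⟩ : ∃ p, w p ≠ u p := by
    by_contra hc; push_neg at hc; exact hne (funext hc)
  by_cases hpa : u p = a
  · have hwp : w p ≠ a := fun h => hpm (h.trans hpa.symm)
    obtain ⟨j, hj1, hj2⟩ := exists_misplaced hp hpa hwp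
    exact ⟨j, fun h => hj2 (h ▸ hj1), hj2⟩
  · exact ⟨p, hpm, hpa⟩

lemma pot_pos {n σ : ℕ} {w u : Fin n → Fin σ} (hp : parikh w = parikh u)
    (hne : w ≠ u) (a : Fin σ) : 1 ≤ pot w u a := by
  obtain ⟨k, h1, h2⟩ := exists_bad hp hne a
  exact Finset.card_pos.mpr ⟨k, by simp [h1, h2]⟩

lemma ub_step {n σ : ℕ} {w u : Fin n → Fin σ} (hp : parikh w = parikh u)
    (hne : w ≠ u) (a : Fin σ) :
    ∃ j k : Fin n, j ≠ k ∧ w j ≠ w k ∧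
      pot (w ∘ Equiv.swap j k) u a + 1 ≤ pot w u a := by
  obtain ⟨k, hk1, hk2⟩ := exists_bad hp hne a
  set b := u k with hb
  obtain ⟨j, hj1, hj2⟩ := exists_misplaced hp hb.symm hk1
  have hjk : j ≠ k := fun h => hk1 (h ▸ hj1)
  have hwjk : w j ≠ w k := fun h => hk1 (h ▸ hj1)
  refine ⟨j, k, hjk, hwjk, ?_⟩
  have hkS : k ∈ Finset.univ.filter (fun i => w i ≠ u i ∧ u i ≠ a) := by
    exact Finset.mem_filter.mpr ⟨Finset.mem_univ _, hk1, hk2⟩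
  have hsub : (Finset.univ.filter fun i => (w ∘ Equiv.swap j k) i ≠ u i ∧ u i ≠ a)
      ⊆ (Finset.univ.filter fun i => w i ≠ u i ∧ u i ≠ a) \ {k} := by
    intro i hi
    simp only [Finset.mem_filter, Finset.mem_univ, true_and, Function.comp_apply] at hi
    rcases eq_or_ne i k with rfl | hik
    · rw [Equiv.swap_apply_right] at hi
      exact absurd (hj1.trans hb) hi.1
    · rw [Finset.mem_sdiff, Finset.mem_filter]
      refine ⟨⟨Finset.mem_univ i, ?_, hi.2⟩, by simpa using hik⟩
      rcases eq_or_ne i j with rfl | hij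
      · exact fun h => hj2 (h ▸ hj1)
      · rw [Equiv.swap_apply_of_ne_of_ne hij hik] at hi
        exact hi.1
  have hcard := Finset.card_le_card hsub
  rw [Finset.card_sdiff_of_subset (by simpa using hkS)] at hcard
  have hpos : 0 < (Finset.univ.filter fun i => w i ≠ u i ∧ u i ≠ a).card :=
    Finset.card_pos.mpr ⟨k, hkS⟩
  simp only [pot]
  rw [Finset.card_singleton] at hcard
  omega

lemma ub_walk {n σ : ℕ} (P : Fin σ → ℕ) (a : Fin σ) :
    ∀ (N : ℕ) (w u : Fin n → Fin σ) (hw : parikh w = P) (hu : parikh u = P),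
    pot w u a ≤ N → ∃ W : (configGraph n σ P).Walk ⟨w, hw⟩ ⟨u, hu⟩, W.length ≤ N := by
  intro N
  induction N with
  | zero =>
    intro w u hw hu hpot
    by_cases h : w = u
    · have he : (⟨w, hw⟩ : Words n σ P) = ⟨u, hu⟩ := Subtype.ext h
      exact ⟨(SimpleGraph.Walk.nil).copy rfl he, by simp⟩
    · have := pot_pos (hw.trans hu.symm) h a
      omega
  | succ N ih =>
    intro w u hw hu hpot
    by_cases h : w = u
    · have he : (⟨w, hw⟩ : Words n σ P) = ⟨u, hu⟩ := Subtype.ext h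
      exact ⟨(SimpleGraph.Walk.nil).copy rfl he, by simp⟩
    · obtain ⟨j, k, hjk, hwjk, hstep⟩ := ub_step (hw.trans hu.symm) h a
      have hw' : parikh (w ∘ Equiv.swap j k) = P := (parikh_comp_equiv w _).trans hw
      obtain ⟨W', hW'⟩ := ih (w ∘ Equiv.swap j k) u hw' hu (by omega)
      have hne : w ≠ w ∘ Equiv.swap j k := by
        intro hcon
        have : w k = (w ∘ Equiv.swap j k) k := by rw [← hcon]
        rw [Function.comp_apply, Equiv.swap_apply_right] at this
        exact hwjk this.symm
      have hadj : (configGraph n σ P).Adj ⟨w, hw⟩ ⟨w ∘ Equiv.swap j k, hw'⟩ := by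
        rw [configGraph, SimpleGraph.fromRel_adj]
        refine ⟨fun hcon => hne (congrArg Subtype.val hcon), Or.inl ?_⟩
        exact ⟨j, k, hjk, hwjk, rfl⟩
      exact ⟨SimpleGraph.Walk.cons hadj W', by simpa using Nat.succ_le_succ hW'⟩

/-- The fixed subspace of the permutation action. -/
def fixSubmodule {n : ℕ} (π : Equiv.Perm (Fin n)) : Submodule ℚ (Fin n → ℚ) where
  carrier := {v | ∀ p, v (π p) = v p}
  add_mem' := fun ha hb p => by simp [ha p, hb p]
  zero_mem' := fun p => rfl
  smul_mem' := fun c v hv p => by simp [hv p]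

lemma mem_fixSubmodule {n : ℕ} {π : Equiv.Perm (Fin n)} {v : Fin n → ℚ} :
    v ∈ fixSubmodule π ↔ ∀ p, v (π p) = v p := Iff.rfl

lemma fixSubmodule_one {n : ℕ} : fixSubmodule (1 : Equiv.Perm (Fin n)) = ⊤ := by
  ext v; simp [mem_fixSubmodule]

lemma finrank_fixSubmodule_one {n : ℕ} :
    finrank ℚ (fixSubmodule (1 : Equiv.Perm (Fin n))) = n := by
  rw [fixSubmodule_one, finrank_top, finrank_fintype_fun_eq_card, Fintype.card_fin]

lemma finrank_fix_swap_mul {n : ℕ} (π : Equiv.Perm (Fin n)) (i j : Fin n) :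
    finrank ℚ (fixSubmodule π) ≤ finrank ℚ (fixSubmodule (Equiv.swap i j * π)) + 1 := by
  set φ : (Fin n → ℚ) →ₗ[ℚ] ℚ := (LinearMap.proj i : (Fin n → ℚ) →ₗ[ℚ] ℚ) - LinearMap.proj j with hφ
  set ψ := φ.domRestrict (fixSubmodule π) with hψ
  have hmap : Submodule.map (fixSubmodule π).subtype (LinearMap.ker ψ)
      ≤ fixSubmodule (Equiv.swap i j * π) := by
    rintro _ ⟨⟨v, hv⟩, hk, rfl⟩
    have hij : v i = v j := by
      have h0 : ψ ⟨v, hv⟩ = 0 := hk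
      rw [hψ, LinearMap.domRestrict_apply, hφ, LinearMap.sub_apply] at h0
      simpa [sub_eq_zero] using h0
    intro p
    have hsw : ∀ q, v (Equiv.swap i j q) = v q := by
      intro q
      rcases eq_or_ne q i with rfl | hqi
      · rw [Equiv.swap_apply_left]; exact hij.symm
      rcases eq_or_ne q j with rfl | hqj
      · rw [Equiv.swap_apply_right]; exact hij
      · rw [Equiv.swap_apply_of_ne_of_ne hqi hqj]
    show v ((Equiv.swap i j * π) p) = v p
    rw [Equiv.Perm.mul_apply, hsw (π p)]
    exact hv p
  have h1 := LinearMap.finrank_range_add_finrank_ker ψ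
  have h2 : finrank ℚ (LinearMap.range ψ) ≤ 1 := by
    simpa using (LinearMap.range ψ).finrank_le
  have h3 : finrank ℚ (LinearMap.ker ψ)
      = finrank ℚ (Submodule.map (fixSubmodule π).subtype (LinearMap.ker ψ)) :=
    (Submodule.finrank_map_subtype_eq _ _).symm
  have h4 := Submodule.finrank_mono hmap
  omega

lemma finrank_fix_list {n : ℕ} (L : List (Equiv.Perm (Fin n)))
    (hL : ∀ s ∈ L, ∃ i j : Fin n, s = Equiv.swap i j) :
    n ≤ finrank ℚ (fixSubmodule L.prod) + L.length := by
  induction L with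
  | nil =>
    have h := finrank_fixSubmodule_one (n := n)
    simp only [List.prod_nil, List.length_nil, add_zero]
    exact h.ge
  | cons s L ih =>
    obtain ⟨i, j, rfl⟩ := hL s List.mem_cons_self
    have := ih (fun t ht => hL t (List.mem_cons_of_mem _ ht))
    have h2 := finrank_fix_swap_mul L.prod i j
    rw [List.prod_cons, List.length_cons]
    omega

lemma construction {n σ : ℕ} (P : Fin σ → ℕ) (hn : ∑ i, P i = n) (a b : Fin σ)
    (hmax : ∀ x, P x ≤ P a) (hab : b ≠ a) (hb : P b ≠ 0) :
    ∃ w₀ u₀ : Fin n → Fin σ, parikh w₀ = P ∧ parikh u₀ = P ∧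
      ∀ π : Equiv.Perm (Fin n), (∀ p, u₀ p = w₀ (π p)) →
        finrank ℚ (fixSubmodule π) ≤ P a := by
  set A := P a with hA
  have hA1 : 1 ≤ A := le_trans (Nat.one_le_iff_ne_zero.mpr hb) (hmax b)
  have hAM : A + P b ≤ n := by
    rw [← hn, ← Finset.add_sum_erase Finset.univ P (Finset.mem_univ a)]
    have : P b ≤ ∑ x ∈ Finset.univ.erase a, P x :=
      Finset.single_le_sum (fun x _ => Nat.zero_le _) (Finset.mem_erase.mpr ⟨hab, Finset.mem_univ b⟩)
    omega
  set M := n - A with hMdef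
  have hM : A + M = n := by omega
  have hM1 : 1 ≤ M := by omega
  -- the sorted non-`a` word
  set Q : Fin σ → ℕ := fun x => if x = a then 0 else P x with hQdef
  have hQs : ∑ x, Q x = M := by
    have h1 : ∑ x, (if x = a then 0 else P x) = ∑ x ∈ Finset.univ.erase a, P x := by
      rw [← Finset.sum_erase_add Finset.univ _ (Finset.mem_univ a), if_pos rfl, add_zero]
      exact Finset.sum_congr rfl (fun x hx => if_neg (Finset.mem_erase.mp hx).1)
    have h2 := Finset.add_sum_erase Finset.univ P (Finset.mem_univ a)
    simp only [hQdef]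
    rw [h1]
    omega
  obtain ⟨z, hz⟩ := exists_word Q hQs
  set v : Fin M → Fin σ := z ∘ Tuple.sort z with hvdef
  have hv : parikh v = Q := by rw [hvdef, show (z ∘ (Tuple.sort z : Equiv.Perm (Fin M))) = z ∘ (Tuple.sort z) from rfl]; exact (parikh_comp_equiv z _).trans hz
  have hvm : Monotone v := Tuple.monotone_sort z
  have hva : ∀ t, v t ≠ a := by
    intro t ht
    have h0 : (Finset.univ.filter fun i => v i = a).card = 0 := by
      have := congrFun hv a
      simpa [parikh, hQdef] using this
    have := Finset.card_eq_zero.mp h0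
    rw [Finset.eq_empty_iff_forall_notMem] at this
    exact this t (by simp [ht])
  have hMn : M ≤ n := by omega
  have hMn' : M < n := by omega
  have hAn' : A < n := by omega
  set w₀ : Fin n → Fin σ := fun p => if h : (p : ℕ) < M then v ⟨p, h⟩ else a with hw₀def
  set u₀ : Fin n → Fin σ := fun p =>
    if h : (p : ℕ) < A then a else v ⟨(p : ℕ) - A, by have := p.isLt; omega⟩ with hu₀def
  have hw₀lt : ∀ (p : Fin n) (h : (p : ℕ) < M), w₀ p = v ⟨p, h⟩ := fun p h => dif_pos h
  have hw₀ge : ∀ (p : Fin n), ¬ ((p : ℕ) < M) → w₀ p = a := fun p h => dif_neg h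
  have hu₀lt : ∀ (p : Fin n), (p : ℕ) < A → u₀ p = a := fun p h => dif_pos h
  have hu₀ge : ∀ (p : Fin n) (h : A ≤ (p : ℕ)) (h2 : (p : ℕ) - A < M),
      u₀ p = v ⟨(p : ℕ) - A, h2⟩ := by
    intro p h h2
    rw [hu₀def]
    exact dif_neg (by omega)
  -- parikh w₀ = P
  have hpw : parikh w₀ = P := by
    funext x
    by_cases hx : x = a
    · subst hx
      have hset : (Finset.univ.filter fun p : Fin n => w₀ p = x)
          = Finset.Ici (⟨M, hMn'⟩ : Fin n) := by
        ext p
        simp only [Finset.mem_filter, Finset.mem_univ, true_and, Finset.mem_Ici, Fin.le_def]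
        constructor
        · intro h
          by_contra hc
          push_neg at hc
          exact hva _ ((hw₀lt p hc).symm.trans h)
        · intro h
          exact hw₀ge p (by omega)
      rw [parikh, hset, Fin.card_Ici]
      simp only [Fin.val_mk]
      omega
    · have hset : (Finset.univ.filter fun p : Fin n => w₀ p = x)
          = (Finset.univ.filter fun t : Fin M => v t = x).map (Fin.castLEEmb hMn) := by
        ext p
        simp only [Finset.mem_filter, Finset.mem_univ, true_and, Finset.mem_map,
          Fin.castLEEmb_apply]
        constructor
        · intro h
          by_cases hpM : (p : ℕ) < M
          · refine ⟨⟨p, hpM⟩, ?_, ?_⟩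
            · rw [← hw₀lt p hpM]; exact h
            · rfl
          · exact absurd ((hw₀ge p hpM).symm.trans h) (fun hh => hx hh.symm)
        · rintro ⟨t, ht, rfl⟩
          have hlt : ((Fin.castLE hMn t : Fin n) : ℕ) < M := by simp [t.isLt]
          rw [hw₀lt _ hlt, ← ht]
          exact congrArg v (Fin.ext rfl)
      rw [parikh, hset, Finset.card_map]
      have := congrFun hv x
      rw [parikh] at this
      rw [this, hQdef]
      simp [hx]
  -- parikh u₀ = P
  have hpu : parikh u₀ = P := by
    funext x
    by_cases hx : x = a
    · subst hx
      have hset : (Finset.univ.filter fun p : Fin n => u₀ p = x)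
          = Finset.Iio (⟨A, hAn'⟩ : Fin n) := by
        ext p
        simp only [Finset.mem_filter, Finset.mem_univ, true_and, Finset.mem_Iio, Fin.lt_def]
        constructor
        · intro h
          by_contra hc
          push_neg at hc
          have h2 : (p : ℕ) - A < M := by have := p.isLt; omega
          exact hva _ ((hu₀ge p (by omega) h2).symm.trans h)
        · intro h
          exact hu₀lt p h
      rw [parikh, hset, Fin.card_Iio]
    · have hcard : (Finset.univ.filter fun p : Fin n => u₀ p = x).card
          = (Finset.univ.filter fun t : Fin M => v t = x).card := by
        refine Finset.card_bij
          (fun p _ => (⟨(p : ℕ) - A, by have := p.isLt; omega⟩ : Fin M)) ?_ ?_ ?_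
        · intro p hp
          simp only [Finset.mem_filter, Finset.mem_univ, true_and] at hp ⊢
          by_cases hpA : (p : ℕ) < A
          · exact absurd ((hu₀lt p hpA).symm.trans hp) (fun hh => hx hh.symm)
          · rw [← hu₀ge p (by omega) (by have := p.isLt; omega)]
            exact hp
        · intro p hp p' hp' he
          have := congrArg Fin.val he
          simp only [Fin.val_mk] at this
          simp only [Finset.mem_filter, Finset.mem_univ, true_and] at hp hp'
          have hA1' : ¬ (p : ℕ) < A := fun hpA =>
            absurd ((hu₀lt p hpA).symm.trans hp) (fun hh => hx hh.symm)
          have hA2' : ¬ (p' : ℕ) < A := fun hpA =>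
            absurd ((hu₀lt p' hpA).symm.trans hp') (fun hh => hx hh.symm)
          apply Fin.ext
          omega
        · intro t ht
          simp only [Finset.mem_filter, Finset.mem_univ, true_and] at ht
          have hlt : A + (t : ℕ) < n := by have := t.isLt; omega
          refine ⟨⟨A + (t : ℕ), hlt⟩, ?_, ?_⟩
          · simp only [Finset.mem_filter, Finset.mem_univ, true_and]
            rw [hu₀ge ⟨A + (t : ℕ), hlt⟩ (by simp) (by have := t.isLt; omega)]
            rw [← ht]
            exact congrArg v (Fin.ext (by simp))
          · exact Fin.ext (by simp)
      rw [parikh, hcard]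
      have := congrFun hv x
      rw [parikh] at this
      rw [this, hQdef]
      simp [hx]
  classical
  refine ⟨w₀, u₀, hpw, hpu, ?_⟩
  intro π hπ
  have key : ∀ r : Fin n → ℚ, r ∈ fixSubmodule π → (∀ q : Fin n, u₀ q = a → r q = 0) →
      r = 0 := by
    intro r hvfix hvzero
    by_contra hv0
    set S : Finset (Fin n) := Finset.univ.filter (fun p => r p ≠ 0) with hSdef
    have hSne : S.Nonempty := by
      obtain ⟨p, hp⟩ := Function.ne_iff.mp hv0
      exact ⟨p, by simp [hSdef]; simpa using hp⟩
    have hstep : ∀ p ∈ S, π p ∈ S := by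
      intro p hp
      simp only [hSdef, Finset.mem_filter, Finset.mem_univ, true_and] at hp ⊢
      rw [mem_fixSubmodule.mp hvfix p]
      exact hp
    have himg : S.image π = S := by
      apply Finset.eq_of_subset_of_card_le
      · intro q hq
        obtain ⟨p, hp, rfl⟩ := Finset.mem_image.mp hq
        exact hstep p hp
      · rw [Finset.card_image_of_injective S π.injective]
    have hSu : ∀ p ∈ S, u₀ p ≠ a := by
      intro p hp h
      simp only [hSdef, Finset.mem_filter, Finset.mem_univ, true_and] at hp
      exact hp (hvzero p h)
    have hSw : ∀ p ∈ S, w₀ p ≠ a := by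
      intro p hp
      obtain ⟨q, hq, rfl⟩ := Finset.mem_image.mp (himg ▸ hp)
      rw [← hπ q]
      exact hSu q hq
    have hbound : ∀ p ∈ S, A ≤ (p : ℕ) ∧ (p : ℕ) < M := by
      intro p hp
      constructor
      · by_contra hc
        push_neg at hc
        exact hSu p hp (hu₀lt p hc)
      · by_contra hc
        exact hSw p hp (hw₀ge p hc)
    have hsum : ∑ p ∈ S, ((u₀ p : Fin σ) : ℕ) = ∑ p ∈ S, ((w₀ p : Fin σ) : ℕ) := by
      have himginj : ∀ p ∈ S, ∀ p' ∈ S, π p = π p' → p = p' := fun p _ p' _ h => π.injective h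
      calc ∑ p ∈ S, ((u₀ p : Fin σ) : ℕ) = ∑ p ∈ S, ((w₀ (π p) : Fin σ) : ℕ) :=
            Finset.sum_congr rfl (fun p _ => by rw [hπ p])
        _ = ∑ q ∈ S.image π, ((w₀ q : Fin σ) : ℕ) := by
            exact (Finset.sum_image (f := fun q => ((w₀ q : Fin σ) : ℕ)) himginj).symm
        _ = ∑ p ∈ S, ((w₀ p : Fin σ) : ℕ) := by rw [himg]
    have hle : ∀ p ∈ S, ((u₀ p : Fin σ) : ℕ) ≤ ((w₀ p : Fin σ) : ℕ) := by
      intro p hp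
      obtain ⟨h1, h2⟩ := hbound p hp
      rw [hw₀lt p h2, hu₀ge p h1 (by omega)]
      exact hvm (Fin.mk_le_mk.mpr (by omega))
    have heq := (Finset.sum_eq_sum_iff_of_le hle).mp hsum
    obtain ⟨p, hp⟩ := hSne
    obtain ⟨h1, h2⟩ := hbound p hp
    have h2' : (p : ℕ) - A < M := by omega
    have hxx := heq p hp
    rw [hw₀lt p h2, hu₀ge p h1 h2'] at hxx
    have hvv : v ⟨(p : ℕ) - A, h2'⟩ = v ⟨(p : ℕ), h2⟩ := Fin.val_injective hxx
    set pM : Fin M := ⟨(p : ℕ), h2⟩ with hpM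
    set pA : Fin M := ⟨(p : ℕ) - A, h2'⟩ with hpA
    have hIcc : Finset.Icc pA pM ⊆ Finset.univ.filter (fun t => v t = v pM) := by
      intro t ht
      rw [Finset.mem_Icc] at ht
      simp only [Finset.mem_filter, Finset.mem_univ, true_and]
      exact le_antisymm (hvm ht.2) (hvv ▸ hvm ht.1)
    have hcard := Finset.card_le_card hIcc
    rw [Fin.card_Icc] at hcard
    have hQ : (Finset.univ.filter (fun t => v t = v pM)).card = Q (v pM) := by
      have := congrFun hv (v pM)
      rw [parikh] at this
      exact this
    have hQP : Q (v pM) ≤ A := by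
      rw [hQdef]
      simp only
      rw [if_neg (hva pM)]
      exact hmax _
    rw [hQ] at hcard
    have hval : ((pM : Fin M) : ℕ) = (p : ℕ) := rfl
    have hval2 : ((pA : Fin M) : ℕ) = (p : ℕ) - A := rfl
    rw [hval, hval2] at hcard
    omega
  set L : ↥(fixSubmodule π) →ₗ[ℚ] ({q : Fin n // u₀ q = a} → ℚ) :=
    (LinearMap.funLeft ℚ ℚ (Subtype.val)).domRestrict (fixSubmodule π) with hLdef
  have hker : ∀ vv : ↥(fixSubmodule π), L vv = 0 → vv = 0 := by
    rintro ⟨v, hv⟩ h0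
    exact Subtype.ext (key v hv (fun q hq => congrFun h0 ⟨q, hq⟩))
  have hinj : Function.Injective L := (injective_iff_map_eq_zero L).mpr hker
  have hfin := LinearMap.finrank_le_finrank_of_injective hinj
  rw [finrank_fintype_fun_eq_card, Fintype.card_subtype] at hfin
  have hPa : (Finset.univ.filter fun q => u₀ q = a).card = P a := by
    have := congrFun hpu a
    rw [parikh] at this
    exact this
  rw [hPa] at hfin
  exact hfin


lemma pot_le {n σ : ℕ} {P : Fin σ → ℕ} {w u : Fin n → Fin σ} (hu : parikh u = P)
    (a : Fin σ) : pot w u a ≤ n - P a := by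
  have hsub : (Finset.univ.filter fun i => w i ≠ u i ∧ u i ≠ a)
      ⊆ (Finset.univ.filter fun i => u i ≠ a) := by
    intro i hi
    simp only [Finset.mem_filter, Finset.mem_univ, true_and] at hi ⊢
    exact hi.2
  have h1 := Finset.card_le_card hsub
  have h2 := Finset.card_filter_add_card_filter_not
    (s := (Finset.univ : Finset (Fin n))) (p := fun i => u i = a)
  have h3 : (Finset.univ.filter fun i => u i = a).card = P a := by
    have := congrFun hu a
    rw [parikh] at this
    exact this
  have h4 : (Finset.univ : Finset (Fin n)).card = n := by simp
  rw [pot]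
  have h5 : (Finset.univ.filter fun i => ¬ u i = a).card
      = (Finset.univ.filter fun i => u i ≠ a).card := rfl
  omega

lemma lb_walk {n σ : ℕ} {P : Fin σ → ℕ} {x y : Words n σ P}
    (W : (configGraph n σ P).Walk x y) :
    ∃ π : Equiv.Perm (Fin n), (∀ p, y.1 p = x.1 (π p)) ∧
      n ≤ finrank ℚ (fixSubmodule π) + W.length := by
  induction W with
  | nil => exact ⟨1, fun p => rfl, by simp [finrank_fixSubmodule_one]⟩
  | @cons x' v' y' h W ih =>
    obtain ⟨π', hπ', hr⟩ := ih
    rw [configGraph, SimpleGraph.fromRel_adj] at h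
    obtain ⟨hne, hsw⟩ := h
    have hkey : ∃ i j : Fin n, v'.1 = x'.1 ∘ Equiv.swap i j := by
      rcases hsw with ⟨i, j, _, _, he⟩ | ⟨i, j, _, _, he⟩
      · exact ⟨i, j, he⟩
      · refine ⟨i, j, funext fun q => ?_⟩
        rw [Function.comp_apply, he, Function.comp_apply, Equiv.swap_apply_self]
    obtain ⟨i, j, he⟩ := hkey
    refine ⟨Equiv.swap i j * π', fun p => ?_, ?_⟩
    · rw [hπ' p, he, Function.comp_apply, Equiv.Perm.mul_apply]
    · have h2 := finrank_fix_swap_mul π' i j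
      rw [SimpleGraph.Walk.length_cons]
      omega

theorem stmt13 (n σ : ℕ) (P : Fin σ → ℕ) (hn : ∑ i, P i = n)
    (htwo : ∃ i j : Fin σ, i ≠ j ∧ P i ≠ 0 ∧ P j ≠ 0) :
    (configGraph n σ P).diam = n - Finset.univ.sup P := by
  classical
  obtain ⟨i0, j0, hij, hi0, hj0⟩ := htwo
  obtain ⟨a, -, ha⟩ := Finset.exists_mem_eq_sup Finset.univ ⟨i0, Finset.mem_univ i0⟩ P
  have hmax : ∀ x, P x ≤ P a := fun x => ha ▸ Finset.le_sup (Finset.mem_univ x)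
  have hbex : ∃ b, b ≠ a ∧ P b ≠ 0 := by
    by_cases h : i0 = a
    · exact ⟨j0, fun hc => hij (h.trans hc.symm), hj0⟩
    · exact ⟨i0, h, hi0⟩
  obtain ⟨b, hba, hb⟩ := hbex
  obtain ⟨w₀, u₀, hw₀, hu₀, hkey⟩ := construction P hn a b hmax hba hb
  set G := configGraph n σ P with hG
  have hub : G.ediam ≤ ((n - P a : ℕ) : ℕ∞) := by
    apply SimpleGraph.ediam_le_of_edist_le
    rintro ⟨w, hw⟩ ⟨u, hu⟩
    obtain ⟨W, hW⟩ := ub_walk P a (n - P a) w u hw hu (pot_le hu a)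
    exact le_trans (SimpleGraph.edist_le W) (Nat.cast_le.mpr hW)
  have hlb : ((n - P a : ℕ) : ℕ∞) ≤ G.edist ⟨w₀, hw₀⟩ ⟨u₀, hu₀⟩ := by
    rw [SimpleGraph.edist_eq_sInf]
    apply le_sInf
    rintro x ⟨W, rfl⟩
    obtain ⟨π, hπc, hπr⟩ := lb_walk W
    have h1 := hkey π hπc
    exact Nat.cast_le.mpr (by omega)
  have heq : G.ediam = ((n - P a : ℕ) : ℕ∞) :=
    le_antisymm hub (le_trans hlb SimpleGraph.edist_le_ediam)
  have : G.diam = n - P a := by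
    rw [SimpleGraph.diam, heq]
    exact ENat.toNat_coe _
  rw [this, ha]
end

section
/- Let P = (P₁, P₂) be a Parikh vector over a binary alphabet. For every word w with Parikh vector P, there exists a Hamiltonian path in the configuration graph G(P) starting at the vertex w. -/
private lemma parikh_apply {n σ : ℕ} (w : Fin n → Fin σ) (x : Fin σ) :
    parikh w x = ∑ i, if w i = x then 1 else 0 := by
  unfold parikh
  rw [Finset.card_filter]

private lemma parikh_comp_perm {n σ : ℕ} (w : Fin n → Fin σ) (π : Equiv.Perm (Fin n)) :
    parikh (w ∘ π) = parikh w := by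
  funext x
  simp only [parikh_apply]
  exact Fintype.sum_equiv π _ _ (fun i => rfl)

private lemma parikh_snoc {n σ : ℕ} (u : Fin n → Fin σ) (a : Fin σ) (x : Fin σ) :
    parikh (Fin.snoc u a) x = parikh u x + if x = a then 1 else 0 := by
  simp only [parikh_apply]
  rw [Fin.sum_univ_castSucc]
  simp [Fin.snoc_castSucc, Fin.snoc_last, eq_comm]

private lemma snoc_restr {n σ : ℕ} (u : Fin (n+1) → Fin σ) :
    Fin.snoc (u ∘ Fin.castSucc) (u (Fin.last n)) = u := by
  funext x
  refine Fin.lastCases ?_ ?_ x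
  · simp
  · intro k; simp

/-- there is some position where symbol `c` occurs, if `P c > 0`. -/
private lemma exists_pos {n σ : ℕ} {P : Fin σ → ℕ} (w : Words n σ P) (c : Fin σ)
    (hc : 0 < P c) : ∃ i, w.1 i = c := by
  have : 0 < (Finset.univ.filter fun i => w.1 i = c).card := by
    have := w.2; rw [funext_iff] at this
    have h := this c; rw [parikh] at h; omega
  obtain ⟨i, hi⟩ := Finset.card_pos.1 this
  exact ⟨i, (Finset.mem_filter.1 hi).2⟩

private lemma not_occur {n σ : ℕ} {P : Fin σ → ℕ} (w : Words n σ P) (c : Fin σ)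
    (hc : P c = 0) (i : Fin n) : w.1 i ≠ c := by
  intro h
  have h2 : i ∈ Finset.univ.filter fun j => w.1 j = c := by simp [h]
  have := w.2; rw [funext_iff] at this
  have h3 := this c; rw [parikh] at h3
  have : (Finset.univ.filter fun j => w.1 j = c).card ≠ 0 :=
    Finset.card_ne_zero_of_mem h2
  omega

private lemma fin2_cases (x y c : Fin 2) (hx : x ≠ c) (hy : y ≠ c) : x = y := by
  fin_cases x <;> fin_cases y <;> fin_cases c <;> simp_all

/-- If some symbol never occurs, all words are equal. -/
private lemma words_subsingleton {n : ℕ} {P : Fin 2 → ℕ} (c : Fin 2) (hc : P c = 0)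
    (v w : Words n 2 P) : v = w := by
  refine Subtype.ext (funext fun i => ?_)
  exact fin2_cases _ _ c (not_occur v c hc i) (not_occur w c hc i)

/-- Lifting a word of length `n` to a word of length `n+1` by appending `a`. -/
private def liftWord {n : ℕ} {P Q : Fin 2 → ℕ} (a : Fin 2)
    (hP : ∀ x, P x = Q x + if x = a then 1 else 0)
    (u : Words n 2 Q) : Words (n+1) 2 P :=
  ⟨Fin.snoc u.1 a, by
    funext x
    rw [parikh_snoc]
    have := u.2; rw [funext_iff] at this
    rw [this x]; exact (hP x).symm⟩

private lemma liftWord_injective {n : ℕ} {P Q : Fin 2 → ℕ} (a : Fin 2)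
    (hP : ∀ x, P x = Q x + if x = a then 1 else 0) :
    Function.Injective (liftWord (n := n) a hP) := by
  intro u v h
  refine Subtype.ext (funext fun i => ?_)
  have h2 := congrFun (congrArg Subtype.val h) i.castSucc
  simpa [liftWord] using h2

private lemma liftWord_last {n : ℕ} {P Q : Fin 2 → ℕ} (a : Fin 2)
    (hP : ∀ x, P x = Q x + if x = a then 1 else 0) (u : Words n 2 Q) :
    (liftWord a hP u).1 (Fin.last n) = a := by
  simp [liftWord]

private lemma swap_castSucc {n : ℕ} (i j k : Fin n) :
    Equiv.swap i.castSucc j.castSucc k.castSucc = (Equiv.swap i j k).castSucc := by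
  rcases eq_or_ne k i with rfl | hki
  · simp
  · rcases eq_or_ne k j with rfl | hkj
    · simp
    · rw [Equiv.swap_apply_of_ne_of_ne (by simpa using hki) (by simpa using hkj),
        Equiv.swap_apply_of_ne_of_ne hki hkj]

private lemma isSwap_snoc {n : ℕ} {u v : Fin n → Fin 2} (a : Fin 2)
    (h : isSwap u v) : isSwap (Fin.snoc u a) (Fin.snoc v a) := by
  obtain ⟨i, j, hij, huv, rfl⟩ := h
  refine ⟨i.castSucc, j.castSucc, by simpa using hij, by simpa using huv, ?_⟩
  funext x
  refine Fin.lastCases ?_ ?_ x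
  · simp only [Function.comp_apply]
    rw [Equiv.swap_apply_of_ne_of_ne (Fin.castSucc_lt_last i).ne'
      (Fin.castSucc_lt_last j).ne']
    simp
  · intro k
    simp only [Function.comp_apply]
    rw [swap_castSucc]
    simp

private def liftHom {n : ℕ} {P Q : Fin 2 → ℕ} (a : Fin 2)
    (hP : ∀ x, P x = Q x + if x = a then 1 else 0) :
    configGraph n 2 Q →g configGraph (n+1) 2 P where
  toFun := liftWord a hP
  map_rel' := by
    intro u v h
    rw [configGraph, SimpleGraph.fromRel_adj] at h ⊢
    obtain ⟨hne, h⟩ := h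
    refine ⟨fun he => hne (liftWord_injective a hP he), ?_⟩
    rcases h with h | h
    · exact Or.inl (isSwap_snoc a h)
    · exact Or.inr (isSwap_snoc a h)

/-- The restriction of a word ending in `a`, as a `Words n 2 Q`. -/
private lemma restr_parikh {n : ℕ} {P Q : Fin 2 → ℕ} (a : Fin 2)
    (hP : ∀ x, P x = Q x + if x = a then 1 else 0)
    (u : Words (n+1) 2 P) (ha : u.1 (Fin.last n) = a) :
    parikh (u.1 ∘ Fin.castSucc) = Q := by
  funext x
  have h1 : parikh u.1 x = parikh (u.1 ∘ Fin.castSucc) x + if x = a then 1 else 0 := by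
    conv_lhs => rw [← snoc_restr u.1, ha]
    rw [parikh_snoc]
  have h2 := u.2; rw [funext_iff] at h2
  have := h2 x
  have := hP x
  omega

private lemma lift_restr {n : ℕ} {P Q : Fin 2 → ℕ} (a : Fin 2)
    (hP : ∀ x, P x = Q x + if x = a then 1 else 0)
    (u : Words (n+1) 2 P) (ha : u.1 (Fin.last n) = a) :
    liftWord a hP ⟨u.1 ∘ Fin.castSucc, restr_parikh a hP u ha⟩ = u := by
  refine Subtype.ext ?_
  show Fin.snoc (u.1 ∘ Fin.castSucc) a = u.1
  rw [← ha, snoc_restr]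

private lemma fin2_other (a : Fin 2) : ∃ b, a ≠ b ∧ ∀ x : Fin 2, x ≠ a → x = b := by
  fin_cases a
  · exact ⟨1, by decide, by decide⟩
  · exact ⟨0, by decide, by decide⟩

private lemma main_lemma : ∀ (n : ℕ) (P : Fin 2 → ℕ) (w : Words n 2 P),
    ∃ (v : Words n 2 P) (p : (configGraph n 2 P).Walk w v), p.IsHamiltonian := by
  intro n
  induction n with
  | zero =>
    intro P w
    refine ⟨w, SimpleGraph.Walk.nil, fun v => ?_⟩
    have : v = w := Subtype.ext (funext fun i => i.elim0)
    simp [this]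
  | succ n ih =>
    intro P w
    by_cases h0 : P 0 = 0
    · refine ⟨w, SimpleGraph.Walk.nil, fun v => ?_⟩
      simp [words_subsingleton 0 h0 v w]
    by_cases h1 : P 1 = 0
    · refine ⟨w, SimpleGraph.Walk.nil, fun v => ?_⟩
      simp [words_subsingleton 1 h1 v w]
    have hpos : ∀ x : Fin 2, 0 < P x := by
      intro x
      fin_cases x
      · exact Nat.pos_of_ne_zero h0
      · exact Nat.pos_of_ne_zero h1
    obtain ⟨a, ha⟩ : ∃ a, w.1 (Fin.last n) = a := ⟨_, rfl⟩
    obtain ⟨b, hab, hother⟩ := fin2_other a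
    -- the two pages
    obtain ⟨Qa, hQa⟩ : ∃ Q, ∀ x, P x = Q x + if x = a then 1 else 0 :=
      ⟨fun x => P x - if x = a then 1 else 0, by
        intro x
        have := hpos a
        by_cases hx : x = a <;> simp [hx] <;> omega⟩
    obtain ⟨Qb, hQb⟩ : ∃ Q, ∀ x, P x = Q x + if x = b then 1 else 0 :=
      ⟨fun x => P x - if x = b then 1 else 0, by
        intro x
        have := hpos b
        by_cases hx : x = b <;> simp [hx] <;> omega⟩
    -- first page: traverse from w
    set wr : Words n 2 Qa := ⟨w.1 ∘ Fin.castSucc, restr_parikh a hQa w ha⟩ with hwr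
    obtain ⟨vr, p, hp⟩ := ih Qa wr
    have hw : liftHom a hQa wr = w := lift_restr a hQa w ha
    set p' := (p.map (liftHom a hQa)).copy hw rfl with hp'
    set v : Words (n+1) 2 P := liftWord a hQa vr with hv
    -- crossing edge
    obtain ⟨i, hi⟩ := exists_pos v b (hpos b)
    have hvlast : v.1 (Fin.last n) = a := liftWord_last a hQa vr
    have hinel : i ≠ Fin.last n := by
      intro h
      rw [h, hvlast] at hi
      exact hab hi
    set v' : Words (n+1) 2 P :=
      ⟨v.1 ∘ Equiv.swap i (Fin.last n), by rw [parikh_comp_perm]; exact v.2⟩ with hv'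
    have hv'last : v'.1 (Fin.last n) = b := by
      show v.1 (Equiv.swap i (Fin.last n) (Fin.last n)) = b
      rw [Equiv.swap_apply_right]
      exact hi
    have hadj : (configGraph (n+1) 2 P).Adj v v' := by
      rw [configGraph, SimpleGraph.fromRel_adj]
      constructor
      · intro h
        apply hab
        rw [← hvlast, h, hv'last]
      · refine Or.inl ⟨i, Fin.last n, hinel, ?_, rfl⟩
        rw [hi, hvlast]
        exact fun h => hab h.symm
    -- second page: traverse from v'
    set v'r : Words n 2 Qb := ⟨v'.1 ∘ Fin.castSucc, restr_parikh b hQb v' hv'last⟩ with hv'r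
    obtain ⟨ur, q, hq⟩ := ih Qb v'r
    have hvq : liftHom b hQb v'r = v' := lift_restr b hQb v' hv'last
    set q' := (q.map (liftHom b hQb)).copy hvq rfl with hq'
    have hadj' : (configGraph (n+1) 2 P).Adj (liftHom a hQa vr) v' := hadj
    refine ⟨liftHom b hQb ur, p'.append (SimpleGraph.Walk.cons hadj' q'), ?_⟩
    intro u
    rw [SimpleGraph.Walk.support_append]
    simp only [List.count_append]
    have hsup1 : p'.support = p.support.map (liftWord a hQa) := by
      rw [hp', SimpleGraph.Walk.support_copy, SimpleGraph.Walk.support_map]; rfl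
    have hsup2 : (SimpleGraph.Walk.cons hadj' q').support.tail
        = q.support.map (liftWord b hQb) := by
      rw [SimpleGraph.Walk.support_cons, List.tail_cons, hq',
        SimpleGraph.Walk.support_copy, SimpleGraph.Walk.support_map]; rfl
    rw [hsup1, hsup2]
    have memlast : ∀ (c : Fin 2) (Q : Fin 2 → ℕ)
        (hQ : ∀ x, P x = Q x + if x = c then 1 else 0) (l : List (Words n 2 Q)),
        u ∈ l.map (liftWord c hQ) → u.1 (Fin.last n) = c := by
      intro c Q hQ l hu
      obtain ⟨y, _, rfl⟩ := List.mem_map.1 hu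
      exact liftWord_last c hQ y
    by_cases hu : u.1 (Fin.last n) = a
    · have h2 : u ∉ q.support.map (liftWord b hQb) := by
        intro h
        exact hab (hu.symm.trans (memlast b Qb hQb q.support h))
      rw [(@List.count_eq_zero _ instBEqOfDecidableEq _ _ _).2 h2]
      have heq : u = liftWord a hQa ⟨u.1 ∘ Fin.castSucc, restr_parikh a hQa u hu⟩ :=
        (lift_restr a hQa u hu).symm
      rw [heq, @List.count_map_of_injective _ _ instBEqOfDecidableEq _ instBEqOfDecidableEq _ _ _ (liftWord_injective a hQa), hp _]
    · have hub : u.1 (Fin.last n) = b := hother _ hu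
      have h2 : u ∉ p.support.map (liftWord a hQa) := by
        intro h
        exact hu (memlast a Qa hQa p.support h)
      rw [(@List.count_eq_zero _ instBEqOfDecidableEq _ _ _).2 h2]
      have heq : u = liftWord b hQb ⟨u.1 ∘ Fin.castSucc, restr_parikh b hQb u hub⟩ :=
        (lift_restr b hQb u hub).symm
      rw [heq, @List.count_map_of_injective _ _ instBEqOfDecidableEq _ instBEqOfDecidableEq _ _ _ (liftWord_injective b hQb), hq _]

theorem stmt16 (n : ℕ) (P : Fin 2 → ℕ) (hn : ∑ i, P i = n) (w : Words n 2 P) :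
    ∃ (v : Words n 2 P) (p : (configGraph n 2 P).Walk w v), p.IsHamiltonian := by
  exact main_lemma n P w
end
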